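/- Let P be a partially ordered set. The assignment x ↦ G_x, (x1 ≤ x2) ↦ G_{x1≤x2} is functorial: for every x ∈ P the map G_{x≤x} is the identity of G_x, and for every chain x1 ≤ x2 ≤ x3 in P one has G_{x2≤x3} ∘ G_{x1≤x2} = G_{x1≤x3}. (The composition law uses that Star x3 ⊆ Star x2 whenever x2 ≤ x3.) -/

import Mathlib

/-- `starP p = {x ∈ P | ∃ y, p ≤ y ∧ x ≤ y}`. -/
def starP {P : Type*} [PartialOrder P] (p : P) : Set P := {x | ∃ y, p ≤ y ∧ x ≤ y}

/-- The tangent fiber `G_x`: the set `Star x` together with an extra element `∞`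
(modelled as `none`). -/
def GFiber {P : Type*} [PartialOrder P] (x : P) : Type _ := Option {y : P // y ∈ starP x}

open Classical in
/-- The transition map `G_{x1 ≤ x2} : G_{x1} → G_{x2}`. -/
noncomputable def GMap {P : Type*} [PartialOrder P] {x1 x2 : P} (_ : x1 ≤ x2) :
    GFiber x1 → GFiber x2
  | some y => if h' : (y : P) ∈ starP x2 then some ⟨(y : P), h'⟩ else none
  | none => none

lemma starP_anti {P : Type*} [PartialOrder P] {x2 x3 : P} (h : x2 ≤ x3) :
    starP x3 ⊆ starP x2 := by
  rintro y ⟨z, h3z, hyz⟩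
  exact ⟨z, h.trans h3z, hyz⟩

theorem stmt3 {P : Type*} [PartialOrder P] :
    (∀ x : P, GMap (le_refl x) = (id : GFiber x → GFiber x)) ∧
    (∀ x1 x2 x3 : P, ∀ (h12 : x1 ≤ x2) (h23 : x2 ≤ x3),
      (GMap h23 ∘ GMap h12 : GFiber x1 → GFiber x3) = GMap (h12.trans h23)) ∧
    (∀ x2 x3 : P, x2 ≤ x3 → starP x3 ⊆ starP x2) := by
  refine ⟨?_, ?_, fun _ _ h => starP_anti h⟩
  · intro x
    funext g
    cases g with
    | none => rfl
    | some y => simp [GMap, y.2]; rfl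
  · intro x1 x2 x3 h12 h23
    funext g
    cases g with
    | none => rfl
    | some y =>
      change GMap h23 (GMap h12 (some y)) = _
      simp only [Function.comp_apply, GMap]
      by_cases h2 : (y : P) ∈ starP x2
      · split <;> simp_all
        cases ‹some _ = some _›
        rfl
      · have h3 : (y : P) ∉ starP x3 := fun h => h2 (starP_anti h23 h)
        split <;> simp_all
        rfl
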